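/- arXiv:1008.1469 — 2 statements merged into one kernel-verified Lean document; each statement's English description precedes it below -/
import Mathlib

section
/- For all nonnegative integers m and n, the sum over k from 0 to floor(n/4) of [m+k choose k]_{q^4} * [m+1 choose n-4k]_q * q^{C(n-4k, 2)} equals the sum over k from 0 to floor(n/2) of (-1)^k * [m+k choose k]_{q^2} * [m+n-2k choose n-2k]_q, as an identity of polynomials in q. -/
open Finset

/-- The Gaussian (q-)binomial coefficient `[a choose b]_q`, defined as
`∏_{i=1}^{b} (1 - q^(a-i+1)) / (1 - q^i)` (which is `0` when `b > a`). -/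
noncomputable def qbinom (q : RatFunc ℚ) (a b : ℕ) : RatFunc ℚ :=
  ∏ i ∈ Finset.range b, (1 - q ^ ((a : ℤ) - i)) / (1 - q ^ ((i : ℤ) + 1))

namespace QSun

abbrev K := RatFunc ℚ

noncomputable def N (q : K) (a b : ℕ) : K := ∏ i ∈ Finset.range b, (1 - q ^ ((a : ℤ) - i))
noncomputable def D (q : K) (b : ℕ) : K := ∏ i ∈ Finset.range b, (1 - q ^ ((i : ℤ) + 1))

lemma qbinom_eq (q : K) (a b : ℕ) : qbinom q a b = N q a b / D q b := by
  rw [qbinom, N, D, Finset.prod_div_distrib]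

lemma X_pow_ne_one (n : ℕ) (hn : n ≠ 0) : (RatFunc.X : K) ^ n ≠ 1 := by
  intro h
  rw [show (RatFunc.X : K) = algebraMap (Polynomial ℚ) K Polynomial.X from rfl, ← map_pow,
    show (1 : K) = algebraMap (Polynomial ℚ) K 1 from (map_one _).symm] at h
  have := RatFunc.algebraMap_injective ℚ h
  have h2 := congrArg Polynomial.natDegree this
  simp [Polynomial.natDegree_X_pow] at h2
  exact hn h2

lemma X_pow_pow_ne_one (d : ℕ) (hd : 0 < d) : ∀ n : ℕ, n ≠ 0 → ((RatFunc.X : K) ^ d) ^ n ≠ 1 := by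
  intro n hn
  rw [← pow_mul]
  exact X_pow_ne_one _ (by positivity)

lemma D_ne_zero {q : K} (hq : ∀ n : ℕ, n ≠ 0 → q ^ n ≠ 1) (b : ℕ) : D q b ≠ 0 := by
  rw [D]
  apply Finset.prod_ne_zero_iff.2
  intro i _
  have : q ^ ((i : ℤ) + 1) = q ^ (i + 1 : ℕ) := by rw [← zpow_natCast]; norm_cast
  rw [this]
  intro h
  exact hq (i+1) (Nat.succ_ne_zero i) (sub_eq_zero.mp h).symm

lemma one_sub_ne_zero {q : K} (hq : ∀ n : ℕ, n ≠ 0 → q ^ n ≠ 1) (b : ℕ) :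
    1 - q ^ ((b : ℤ) + 1) ≠ 0 := by
  have : q ^ ((b : ℤ) + 1) = q ^ (b + 1 : ℕ) := by rw [← zpow_natCast]; norm_cast
  rw [this]
  intro h
  exact hq (b+1) (Nat.succ_ne_zero b) (sub_eq_zero.mp h).symm

lemma N_succ_succ (q : K) (a b : ℕ) :
    N q (a+1) (b+1) = N q a b * (1 - q ^ ((a : ℤ) + 1)) := by
  rw [N, Finset.prod_range_succ', N]
  congr 1
  · apply Finset.prod_congr rfl
    intro i _
    congr 2
    omega

lemma N_succ (q : K) (a b : ℕ) :
    N q a (b+1) = N q a b * (1 - q ^ ((a : ℤ) - b)) := by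
  rw [N, Finset.prod_range_succ, N]

lemma D_succ (q : K) (b : ℕ) : D q (b+1) = D q b * (1 - q ^ ((b : ℤ) + 1)) := by
  rw [D, Finset.prod_range_succ, D]

lemma N_self_eq_D {q : K} (a : ℕ) : N q a a = D q a := by
  rw [N, D, ← Finset.prod_range_reflect]
  apply Finset.prod_congr rfl
  intro i hi
  rw [Finset.mem_range] at hi
  congr 2
  omega

lemma qbinom_self {q : K} (hq : ∀ n : ℕ, n ≠ 0 → q ^ n ≠ 1) (a : ℕ) : qbinom q a a = 1 := by
  rw [qbinom_eq, N_self_eq_D, div_self (D_ne_zero hq a)]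

lemma qbinom_zero (q : K) (a : ℕ) : qbinom q a 0 = 1 := by
  simp [qbinom]

lemma qbinom_eq_zero (q : K) {a b : ℕ} (h : a < b) : qbinom q a b = 0 := by
  rw [qbinom]
  apply Finset.prod_eq_zero (Finset.mem_range.2 h)
  simp

lemma pascal {q : K} (hq0 : q ≠ 0) (hq : ∀ n : ℕ, n ≠ 0 → q ^ n ≠ 1) (a b : ℕ) :
    qbinom q (a+1) (b+1) = qbinom q a (b+1) + q ^ ((a : ℤ) - b) * qbinom q a b := by
  rw [qbinom_eq, qbinom_eq, qbinom_eq, N_succ_succ, N_succ, D_succ]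
  have h1 : D q b ≠ 0 := D_ne_zero hq b
  have h2 : (1 : K) - q ^ ((b : ℤ) + 1) ≠ 0 := one_sub_ne_zero hq b
  have e : q ^ ((a : ℤ) - b) * q ^ ((b : ℤ) + 1) = q ^ ((a : ℤ) + 1) := by
    rw [← zpow_add₀ hq0]; ring_nf
  field_simp
  linear_combination (N q a b) * e

lemma pascal_nat {q : K} (hq0 : q ≠ 0) (hq : ∀ n : ℕ, n ≠ 0 → q ^ n ≠ 1) (m j : ℕ) :
    qbinom q (m+j+2) (j+1) = qbinom q (m+j+1) (j+1) + q ^ (m+1) * qbinom q (m+j+1) j := by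
  have h := pascal hq0 hq (m+j+1) j
  rw [show ((m+j+1 : ℕ) : ℤ) - (j : ℤ) = ((m+1 : ℕ) : ℤ) by omega, zpow_natCast] at h
  convert h using 3

open PowerSeries

lemma step_coeff (a : K) (d : ℕ) (f : PowerSeries K) (n : ℕ) :
    coeff n ((1 - PowerSeries.C a * PowerSeries.X ^ d) * f) =
      coeff n f - a * (if d ≤ n then coeff (n - d) f else 0) := by
  rw [sub_mul, one_mul, map_sub, mul_assoc, coeff_C_mul, coeff_X_pow_mul']

lemma add_step_coeff (a : K) (d : ℕ) (f : PowerSeries K) (n : ℕ) :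
    coeff n ((1 + PowerSeries.C a * PowerSeries.X ^ d) * f) =
      coeff n f + a * (if d ≤ n then coeff (n - d) f else 0) := by
  rw [add_mul, one_mul, map_add, mul_assoc, coeff_C_mul, coeff_X_pow_mul']

noncomputable def B (Q s : K) (d m : ℕ) : PowerSeries K :=
  PowerSeries.mk fun n => if d ∣ n then s ^ (n / d) * qbinom Q (m + n / d) (n / d) else 0

lemma not_dvd_sub {d n : ℕ} (h : d ≤ n) (hdn : ¬ d ∣ n) : ¬ d ∣ n - d := by
  intro hdvd
  have := Nat.dvd_add hdvd dvd_rfl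
  rw [Nat.sub_add_cancel h] at this
  exact hdn this

lemma B_step (Q s : K) (hQ0 : Q ≠ 0) (hQ : ∀ n : ℕ, n ≠ 0 → Q ^ n ≠ 1)
    (d : ℕ) (hd : 0 < d) (m : ℕ) :
    (1 - PowerSeries.C (s * Q ^ (m+1)) * PowerSeries.X ^ d) * B Q s d (m+1) = B Q s d m := by
  ext n
  rw [step_coeff]
  simp only [B, coeff_mk]
  by_cases hdn : d ∣ n
  · obtain ⟨k, rfl⟩ := hdn
    rw [if_pos (dvd_mul_right d k), if_pos (dvd_mul_right d k), Nat.mul_div_cancel_left k hd]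
    cases k with
    | zero =>
      rw [Nat.mul_zero, if_neg (by omega)]
      simp [qbinom_zero]
    | succ j =>
      have hmul : d * (j+1) = d * j + d := by ring
      have h1 : d ≤ d * (j+1) := by omega
      have h2 : d * (j+1) - d = d * j := by omega
      rw [if_pos h1, h2, if_pos (dvd_mul_right d j), Nat.mul_div_cancel_left j hd]
      have hp := pascal_nat hQ0 hQ m j
      rw [show m + 1 + (j+1) = m+j+2 by omega, show m+1+j = m+j+1 by omega,
        show m + (j+1) = m+j+1 by omega]
      linear_combination (s ^ (j+1)) * hp
  · rw [if_neg hdn, if_neg hdn]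
    by_cases h : d ≤ n
    · rw [if_pos h, if_neg (not_dvd_sub h hdn)]
      ring
    · rw [if_neg h]
      ring

lemma B_zero (Q s : K) (hQ0 : Q ≠ 0) (hQ : ∀ n : ℕ, n ≠ 0 → Q ^ n ≠ 1)
    (d : ℕ) (hd : 0 < d) :
    (1 - PowerSeries.C (s * Q ^ 0) * PowerSeries.X ^ d) * B Q s d 0 = 1 := by
  ext n
  rw [step_coeff, coeff_one]
  simp only [B, coeff_mk, pow_zero, mul_one]
  by_cases hdn : d ∣ n
  · obtain ⟨k, rfl⟩ := hdn
    rw [if_pos (dvd_mul_right d k), Nat.mul_div_cancel_left k hd]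
    cases k with
    | zero =>
      rw [Nat.mul_zero, if_neg (by omega), if_pos rfl]
      simp [qbinom_zero]
    | succ j =>
      have hmul : d * (j+1) = d * j + d := by ring
      have h1 : d ≤ d * (j+1) := by omega
      have h2 : d * (j+1) - d = d * j := by omega
      rw [if_pos h1, h2, if_pos (dvd_mul_right d j), Nat.mul_div_cancel_left j hd,
        if_neg (by positivity : d * (j+1) ≠ 0), zero_add, zero_add, qbinom_self hQ,
        qbinom_self hQ]
      ring
  · have hn : n ≠ 0 := by rintro rfl; exact hdn ⟨0, rfl⟩
    rw [if_neg hdn, if_neg hn]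
    by_cases h : d ≤ n
    · rw [if_pos h, if_neg (not_dvd_sub h hdn)]
      ring
    · rw [if_neg h]
      ring

lemma GF_inv (Q s : K) (hQ0 : Q ≠ 0) (hQ : ∀ n : ℕ, n ≠ 0 → Q ^ n ≠ 1)
    (d : ℕ) (hd : 0 < d) (m : ℕ) :
    B Q s d m * ∏ i ∈ range (m+1), (1 - PowerSeries.C (s * Q ^ i) * PowerSeries.X ^ d) = 1 := by
  induction m with
  | zero =>
    rw [show range 1 = {0} from rfl, Finset.prod_singleton, mul_comm]
    exact B_zero Q s hQ0 hQ d hd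
  | succ m ih =>
    rw [Finset.prod_range_succ, show B Q s d (m+1) *
        ((∏ i ∈ range (m+1), (1 - PowerSeries.C (s * Q ^ i) * PowerSeries.X ^ d)) *
          (1 - PowerSeries.C (s * Q ^ (m+1)) * PowerSeries.X ^ d)) =
        ((1 - PowerSeries.C (s * Q ^ (m+1)) * PowerSeries.X ^ d) * B Q s d (m+1)) *
          ∏ i ∈ range (m+1), (1 - PowerSeries.C (s * Q ^ i) * PowerSeries.X ^ d) by ring,
      B_step Q s hQ0 hQ d hd m, ih]

noncomputable def Th (q : K) (m : ℕ) : PowerSeries K :=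
  PowerSeries.mk fun j => qbinom q (m+1) j * q ^ (j.choose 2)

lemma Th_step {q : K} (hq0 : q ≠ 0) (hq : ∀ n : ℕ, n ≠ 0 → q ^ n ≠ 1) (m : ℕ) :
    Th q (m+1) = (1 + PowerSeries.C (q ^ (m+1)) * PowerSeries.X ^ 1) * Th q m := by
  ext n
  rw [add_step_coeff]
  simp only [Th, coeff_mk]
  cases n with
  | zero => simp [qbinom_zero]
  | succ j =>
    rw [if_pos (by omega : 1 ≤ j + 1), Nat.add_sub_cancel]
    have hp := pascal hq0 hq (m+1) j
    have he : q ^ (((m+1 : ℕ) : ℤ) - j) * q ^ ((j+1).choose 2)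
        = q ^ (m+1) * q ^ (j.choose 2) := by
      rw [← zpow_natCast q ((j+1).choose 2), ← zpow_natCast q (m+1),
        ← zpow_natCast q (j.choose 2), ← zpow_add₀ hq0, ← zpow_add₀ hq0]
      congr 1
      have hch : (j+1).choose 2 = j.choose 1 + j.choose 2 := Nat.choose_succ_succ j 1
      rw [hch, Nat.choose_one_right]
      push_cast
      ring
    rw [show m+1+1 = m+2 by omega] at *
    linear_combination q ^ ((j+1).choose 2) * hp + qbinom q (m+1) j * he

lemma Th_eq {q : K} (hq0 : q ≠ 0) (hq : ∀ n : ℕ, n ≠ 0 → q ^ n ≠ 1) (m : ℕ) :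
    Th q m = ∏ i ∈ range (m+1), (1 + PowerSeries.C (q ^ i) * PowerSeries.X ^ 1) := by
  induction m with
  | zero =>
    rw [show range 1 = {0} from rfl, Finset.prod_singleton, pow_zero, map_one, one_mul]
    ext n
    simp only [Th, coeff_mk]
    match n with
    | 0 => simp [qbinom_zero]
    | 1 => simp [qbinom_self hq, PowerSeries.coeff_one, PowerSeries.coeff_X_pow]
    | (j+2) =>
      rw [qbinom_eq_zero q (by omega : 1 < j + 2)]
      simp [PowerSeries.coeff_one, PowerSeries.coeff_X_pow, PowerSeries.coeff_X]
  | succ m ih =>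
    conv_rhs => rw [Finset.prod_range_succ]
    rw [Th_step hq0 hq m, ih]
    ring

lemma sum_ite_dvd (d : ℕ) (hd : 0 < d) (n : ℕ) (F : ℕ → K) :
    ∑ a ∈ range (n+1), (if d ∣ a then F a else 0) = ∑ k ∈ range (n/d + 1), F (d * k) := by
  rw [← Finset.sum_filter]
  have himg : (range (n+1)).filter (fun a => d ∣ a) = (range (n/d+1)).image (fun k => d * k) := by
    ext a
    simp only [Finset.mem_filter, Finset.mem_image, Finset.mem_range, Nat.lt_succ_iff]
    constructor
    · rintro ⟨ha, k, rfl⟩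
      refine ⟨k, (Nat.le_div_iff_mul_le hd).2 (by rw [mul_comm]; exact ha), rfl⟩
    · rintro ⟨k, hk, rfl⟩
      have h' := (Nat.le_div_iff_mul_le hd).1 hk
      exact ⟨by rwa [mul_comm], ⟨k, rfl⟩⟩
  rw [himg, Finset.sum_image (fun a _ b _ h => by
    exact Nat.eq_of_mul_eq_mul_left hd h)]

lemma coeff_L (m n : ℕ) :
    (PowerSeries.coeff n) (B (RatFunc.X ^ 4) 1 4 m * Th RatFunc.X m) =
    ∑ k ∈ range (n / 4 + 1),
      qbinom (RatFunc.X ^ 4) (m + k) k * qbinom RatFunc.X (m + 1) (n - 4 * k) *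
        RatFunc.X ^ ((n - 4 * k).choose 2) := by
  rw [PowerSeries.coeff_mul, Finset.Nat.sum_antidiagonal_eq_sum_range_succ_mk]
  simp only [B, Th, coeff_mk]
  have hstep : ∀ a ∈ range (n+1),
      (if 4 ∣ a then (1:K) ^ (a/4) * qbinom (RatFunc.X ^ 4) (m + a/4) (a/4) else 0) *
        (qbinom RatFunc.X (m+1) (n - a) * RatFunc.X ^ ((n - a).choose 2)) =
      (if 4 ∣ a then qbinom (RatFunc.X ^ 4) (m + a/4) (a/4) *
          qbinom RatFunc.X (m+1) (n - a) * RatFunc.X ^ ((n - a).choose 2) else 0) := by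
    intro a _
    split_ifs
    · rw [one_pow]; ring
    · rw [zero_mul]
  rw [Finset.sum_congr rfl hstep,
    sum_ite_dvd 4 (by norm_num) n (fun a => qbinom (RatFunc.X ^ 4) (m + a/4) (a/4) *
      qbinom RatFunc.X (m+1) (n - a) * RatFunc.X ^ ((n - a).choose 2))]
  apply Finset.sum_congr rfl
  intro k _
  have h4 : 4 * k / 4 = k := Nat.mul_div_cancel_left k (by norm_num)
  simp only [h4]

lemma coeff_R (m n : ℕ) :
    (PowerSeries.coeff n) (B (RatFunc.X ^ 2) (-1) 2 m * B RatFunc.X 1 1 m) =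
    ∑ k ∈ range (n / 2 + 1),
      (-1) ^ k * qbinom (RatFunc.X ^ 2) (m + k) k *
        qbinom RatFunc.X (m + n - 2 * k) (n - 2 * k) := by
  rw [PowerSeries.coeff_mul, Finset.Nat.sum_antidiagonal_eq_sum_range_succ_mk]
  simp only [B, coeff_mk, Nat.div_one, Nat.one_dvd, if_true, one_pow, one_mul]
  have hstep : ∀ a ∈ range (n+1),
      (if 2 ∣ a then (-1:K) ^ (a/2) * qbinom (RatFunc.X ^ 2) (m + a/2) (a/2) else 0) *
        qbinom RatFunc.X (m + (n - a)) (n - a) =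
      (if 2 ∣ a then (-1:K) ^ (a/2) * qbinom (RatFunc.X ^ 2) (m + a/2) (a/2) *
          qbinom RatFunc.X (m + (n - a)) (n - a) else 0) := by
    intro a _
    split_ifs
    · ring
    · rw [zero_mul]
  rw [Finset.sum_congr rfl hstep,
    sum_ite_dvd 2 (by norm_num) n (fun a => (-1:K) ^ (a/2) * qbinom (RatFunc.X ^ 2) (m + a/2) (a/2) *
      qbinom RatFunc.X (m + (n - a)) (n - a))]
  apply Finset.sum_congr rfl
  intro k hk
  rw [Finset.mem_range] at hk
  have h2 : 2 * k / 2 = k := Nat.mul_div_cancel_left k (by norm_num)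
  have hle : 2 * k ≤ n := by
    have := (Nat.le_div_iff_mul_le (by norm_num : 0 < 2)).1 (by omega : k ≤ n / 2)
    omega
  simp only [h2]
  rw [show m + (n - 2 * k) = m + n - 2 * k by omega]

lemma constCoeff_factor (a : K) (d : ℕ) (hd : 0 < d) :
    PowerSeries.constantCoeff (1 - PowerSeries.C a * PowerSeries.X ^ d) = 1 := by
  rw [map_sub, map_one, map_mul, map_pow, PowerSeries.constantCoeff_X,
    zero_pow hd.ne', mul_zero, sub_zero]

lemma series_eq (m : ℕ) :
    B (RatFunc.X ^ 4) 1 4 m * Th RatFunc.X m = B (RatFunc.X ^ 2) (-1) 2 m * B RatFunc.X 1 1 m := by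
  set x : K := RatFunc.X with hx
  have hx0 : x ≠ 0 := RatFunc.X_ne_zero
  have hx1 : ∀ n : ℕ, n ≠ 0 → x ^ n ≠ 1 := fun n hn => X_pow_ne_one n hn
  have hx2 : ∀ n : ℕ, n ≠ 0 → (x ^ 2) ^ n ≠ 1 := X_pow_pow_ne_one 2 (by norm_num)
  have hx4 : ∀ n : ℕ, n ≠ 0 → (x ^ 4) ^ n ≠ 1 := X_pow_pow_ne_one 4 (by norm_num)
  have h4 := GF_inv (x ^ 4) 1 (pow_ne_zero 4 hx0) hx4 4 (by norm_num) m
  have h2 := GF_inv (x ^ 2) (-1) (pow_ne_zero 2 hx0) hx2 2 (by norm_num) m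
  have h1 := GF_inv x 1 hx0 hx1 1 (by norm_num) m
  have hth := Th_eq hx0 hx1 m
  set P4 := ∏ i ∈ range (m+1), (1 - PowerSeries.C ((1:K) * (x ^ 4) ^ i) * PowerSeries.X ^ 4) with hP4
  set P2 := ∏ i ∈ range (m+1), (1 - PowerSeries.C ((-1:K) * (x ^ 2) ^ i) * PowerSeries.X ^ 2) with hP2
  set P1 := ∏ i ∈ range (m+1), (1 - PowerSeries.C ((1:K) * x ^ i) * PowerSeries.X ^ 1) with hP1
  set P1p := ∏ i ∈ range (m+1), (1 + PowerSeries.C (x ^ i) * PowerSeries.X ^ 1) with hP1p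
  have hfac : P4 = P2 * P1 * P1p := by
    rw [hP4, hP2, hP1, hP1p, ← Finset.prod_mul_distrib, ← Finset.prod_mul_distrib]
    apply Finset.prod_congr rfl
    intro i _
    have c4 : PowerSeries.C ((1:K) * (x ^ 4) ^ i) = (PowerSeries.C (x ^ i)) ^ 4 := by
      rw [← map_pow]; congr 1; rw [one_mul]; ring
    have c2 : PowerSeries.C ((-1:K) * (x ^ 2) ^ i) = -(PowerSeries.C (x ^ i)) ^ 2 := by
      rw [← map_pow, ← map_neg]; congr 1; ring
    have c1 : PowerSeries.C ((1:K) * x ^ i) = PowerSeries.C (x ^ i) := by rw [one_mul]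
    rw [c4, c2, c1]
    ring
  have hne : P2 * P1 ≠ 0 := by
    intro h
    have hc : PowerSeries.constantCoeff (P2 * P1) = 1 := by
      rw [map_mul, hP2, hP1, map_prod, map_prod]
      rw [Finset.prod_congr rfl (fun i _ => constCoeff_factor ((-1:K) * (x ^ 2) ^ i) 2 (by norm_num)),
        Finset.prod_congr rfl (fun i _ => constCoeff_factor ((1:K) * x ^ i) 1 (by norm_num))]
      simp
    rw [h, map_zero] at hc
    exact zero_ne_one hc
  apply mul_right_cancel₀ hne
  calc B (x ^ 4) 1 4 m * Th x m * (P2 * P1)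
      = B (x ^ 4) 1 4 m * (P2 * P1 * P1p) := by rw [hth]; ring
    _ = B (x ^ 4) 1 4 m * P4 := by rw [hfac]
    _ = 1 := h4
    _ = (B (x ^ 2) (-1) 2 m * P2) * (B x 1 1 m * P1) := by rw [h2, h1]; ring
    _ = B (x ^ 2) (-1) 2 m * B x 1 1 m * (P2 * P1) := by ring

end QSun

theorem q_sun_identity_new4 (m n : ℕ) :
    ∑ k ∈ range (n / 4 + 1),
      qbinom (RatFunc.X ^ 4) (m + k) k * qbinom RatFunc.X (m + 1) (n - 4 * k) *
        RatFunc.X ^ ((n - 4 * k).choose 2) =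
    ∑ k ∈ range (n / 2 + 1),
      (-1) ^ k * qbinom (RatFunc.X ^ 2) (m + k) k * qbinom RatFunc.X (m + n - 2 * k) (n - 2 * k) := by
  have h := congrArg (PowerSeries.coeff n) (QSun.series_eq m)
  rwa [QSun.coeff_L, QSun.coeff_R] at h
end

section
/- For all nonnegative integers m and n, the signed sum over pairs (λ, μ) of partitions with largest parts at most m+1 satisfying 2ℓ(λ) + ℓ(μ) = n of (-1)^{ℓ(λ)} q^{2|λ|+|μ|} equals the sum over pairs (τ, μ) with τ a partition and μ a partition into distinct parts, both with largest part at most m+1 and 4ℓ(τ) + ℓ(μ) = n, of q^{4|τ|+|μ|}. -/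
open Finset PowerSeries

section Aux

variable {R : Type*} [CommRing R]

/-- Antitone functions `Fin k → Fin M` (partitions with `k` parts, each part `≤ M`). -/
def antiSet (M k : ℕ) : Finset (Fin k → Fin M) :=
  {f : Fin k → Fin M | ∀ i j : Fin k, i ≤ j → f j ≤ f i}

/-- Strictly antitone functions `Fin k → Fin M` (distinct-part partitions). -/
def strictSet (M k : ℕ) : Finset (Fin k → Fin M) :=
  {f : Fin k → Fin M | ∀ i j : Fin k, i < j → f j < f i}

/-- The weight of a partition. -/
def wt {M k : ℕ} (f : Fin k → Fin M) : ℕ := ∑ i, ((f i : ℕ) + 1)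

/-- Generating polynomial of partitions with `k` parts `≤ M`. -/
def Pp (q : R) (M k : ℕ) : R := ∑ f ∈ antiSet M k, q ^ wt f

/-- Generating polynomial of distinct-part partitions with `k` parts `≤ M`. -/
def Dd (q : R) (M k : ℕ) : R := ∑ f ∈ strictSet M k, q ^ wt f

lemma mem_antiSet {M k : ℕ} {f : Fin k → Fin M} :
    f ∈ antiSet M k ↔ ∀ i j : Fin k, i ≤ j → f j ≤ f i := by simp [antiSet]

lemma mem_strictSet {M k : ℕ} {f : Fin k → Fin M} :
    f ∈ strictSet M k ↔ ∀ i j : Fin k, i < j → f j < f i := by simp [strictSet]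

lemma wt_succ {M k : ℕ} (f : Fin (k + 1) → Fin M) :
    wt f = ((f 0 : ℕ) + 1) + wt (fun i => f i.succ) := by
  simp [wt, Fin.sum_univ_succ]

lemma Pp_k0 (q : R) (M : ℕ) : Pp q M 0 = 1 := by
  have h : antiSet M 0 = Finset.univ := by ext f; simp [antiSet]
  simp [Pp, h, wt]

lemma Dd_k0 (q : R) (M : ℕ) : Dd q M 0 = 1 := by
  have h : strictSet M 0 = Finset.univ := by ext f; simp [strictSet]
  simp [Dd, h, wt]

lemma Pp_M0 (q : R) (k : ℕ) : Pp q 0 (k + 1) = 0 := by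
  have : antiSet 0 (k + 1) = ∅ := Finset.eq_empty_of_isEmpty _
  simp [Pp, this]

lemma Dd_M0 (q : R) (k : ℕ) : Dd q 0 (k + 1) = 0 := by
  have : strictSet 0 (k + 1) = ∅ := Finset.eq_empty_of_isEmpty _
  simp [Dd, this]

lemma Pp_succ (q : R) (M k : ℕ) :
    Pp q (M + 1) (k + 1) = q ^ (M + 1) * Pp q (M + 1) k + Pp q M (k + 1) := by
  classical
  rw [Pp, ← Finset.sum_filter_add_sum_filter_not (antiSet (M+1) (k+1))
      (fun f => f 0 = Fin.last M)]
  congr 1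
  · rw [Pp, Finset.mul_sum]
    refine Finset.sum_bij' (i := fun f _ => fun i : Fin k => f i.succ)
      (j := fun g _ => Fin.cons (Fin.last M) g) ?_ ?_ ?_ ?_ ?_
    · intro f hf
      simp only [Finset.mem_filter, mem_antiSet] at hf
      rw [mem_antiSet]
      intro i j hij
      exact hf.1 _ _ (Fin.succ_le_succ_iff.mpr hij)
    · intro g hg
      rw [mem_antiSet] at hg
      simp only [Finset.mem_filter, mem_antiSet, Fin.cons_zero, and_true]
      intro i j hij
      revert hij
      refine Fin.cases ?_ (fun j' => ?_) j
      · intro hij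
        have : i = 0 := le_antisymm hij (Fin.zero_le _)
        simp [this]
      · refine Fin.cases ?_ (fun i' => ?_) i
        · intro _
          simp [Fin.cons_succ, Fin.cons_zero, Fin.le_last]
        · intro h
          simp only [Fin.cons_succ]
          exact hg _ _ (Fin.succ_le_succ_iff.mp h)
    · intro f hf
      funext i
      refine Fin.cases ?_ (fun i' => ?_) i
      · simp only [Fin.cons_zero]
        exact ((Finset.mem_filter.mp hf).2).symm
      · simp [Fin.cons_succ]
    · intro g hg
      funext i
      simp [Fin.cons_succ]
    · intro f hf
      have h0 : f 0 = Fin.last M := (Finset.mem_filter.mp hf).2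
      rw [wt_succ f, h0, pow_add]
      simp [Fin.val_last]
  · rw [Pp]
    have hlt : ∀ f ∈ (antiSet (M+1) (k+1)).filter (fun f => ¬ f 0 = Fin.last M),
        ∀ i, (f i : ℕ) < M := by
      intro f hf i
      obtain ⟨hf1, h0⟩ := Finset.mem_filter.mp hf
      rw [mem_antiSet] at hf1
      have h1 : f i ≤ f 0 := hf1 0 i (Fin.zero_le _)
      have h2 : f 0 < Fin.last M := lt_of_le_of_ne (Fin.le_last _) h0
      have h3 := lt_of_le_of_lt h1 h2
      simpa [Fin.lt_iff_val_lt_val, Fin.val_last] using h3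
    refine Finset.sum_bij'
      (i := fun f hf => fun i : Fin (k+1) => (⟨(f i : ℕ), hlt f hf i⟩ : Fin M))
      (j := fun g _ => fun i => (g i).castSucc) ?_ ?_ ?_ ?_ ?_
    · intro f hf
      obtain ⟨hf1, _⟩ := Finset.mem_filter.mp hf
      rw [mem_antiSet] at hf1
      rw [mem_antiSet]
      intro i j hij
      exact hf1 i j hij
    · intro g hg
      rw [mem_antiSet] at hg
      simp only [Finset.mem_filter, mem_antiSet]
      constructor
      · intro i j hij
        exact Fin.castSucc_le_castSucc_iff.mpr (hg i j hij)
      · exact ne_of_lt (Fin.castSucc_lt_last _)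
    · intro f hf
      funext i
      apply Fin.ext
      simp [Fin.coe_castSucc]
    · intro g hg
      funext i
      apply Fin.ext
      simp [Fin.coe_castSucc]
    · intro f hf
      simp [wt]

lemma Dd_succ (q : R) (M k : ℕ) :
    Dd q (M + 1) (k + 1) = q ^ (M + 1) * Dd q M k + Dd q M (k + 1) := by
  classical
  rw [Dd, ← Finset.sum_filter_add_sum_filter_not (strictSet (M+1) (k+1))
      (fun f => f 0 = Fin.last M)]
  congr 1
  · have hlt : ∀ f ∈ (strictSet (M+1) (k+1)).filter (fun f => f 0 = Fin.last M),
        ∀ i : Fin k, (f i.succ : ℕ) < M := by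
      intro f hf i
      obtain ⟨hf1, h0⟩ := Finset.mem_filter.mp hf
      rw [mem_strictSet] at hf1
      have h1 : f i.succ < f 0 := hf1 0 i.succ (Fin.succ_pos i)
      rw [h0] at h1
      simpa [Fin.lt_iff_val_lt_val, Fin.val_last] using h1
    rw [Dd, Finset.mul_sum]
    refine Finset.sum_bij'
      (i := fun f hf => fun i : Fin k => (⟨(f i.succ : ℕ), hlt f hf i⟩ : Fin M))
      (j := fun g _ => Fin.cons (Fin.last M) (fun i => (g i).castSucc)) ?_ ?_ ?_ ?_ ?_
    · intro f hf
      obtain ⟨hf1, _⟩ := Finset.mem_filter.mp hf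
      rw [mem_strictSet] at hf1
      rw [mem_strictSet]
      intro i j hij
      exact hf1 i.succ j.succ (Fin.succ_lt_succ_iff.mpr hij)
    · intro g hg
      rw [mem_strictSet] at hg
      simp only [Finset.mem_filter, mem_strictSet, Fin.cons_zero, and_true]
      intro i j hij
      revert hij
      refine Fin.cases ?_ (fun j' => ?_) j
      · intro hij; exact absurd hij (Fin.not_lt_zero _)
      · refine Fin.cases ?_ (fun i' => ?_) i
        · intro _
          simp only [Fin.cons_succ, Fin.cons_zero]
          exact Fin.castSucc_lt_last _
        · intro h
          simp only [Fin.cons_succ]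
          exact Fin.castSucc_lt_castSucc_iff.mpr (hg _ _ (Fin.succ_lt_succ_iff.mp h))
    · intro f hf
      funext i
      refine Fin.cases ?_ (fun i' => ?_) i
      · simp only [Fin.cons_zero]
        exact ((Finset.mem_filter.mp hf).2).symm
      · simp only [Fin.cons_succ]
        apply Fin.ext
        simp
    · intro g hg
      funext i
      apply Fin.ext
      simp [Fin.cons_succ]
    · intro f hf
      have h0 : f 0 = Fin.last M := (Finset.mem_filter.mp hf).2
      have hw : wt (fun i => f i.succ)
          = wt (fun i : Fin k => (⟨(f i.succ : ℕ), hlt f hf i⟩ : Fin M)) := by simp [wt]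
      rw [wt_succ f, h0, Fin.val_last, hw, pow_add]
  · have hlt : ∀ f ∈ (strictSet (M+1) (k+1)).filter (fun f => ¬ f 0 = Fin.last M),
        ∀ i, (f i : ℕ) < M := by
      intro f hf i
      obtain ⟨hf1, h0⟩ := Finset.mem_filter.mp hf
      rw [mem_strictSet] at hf1
      have h1 : f i ≤ f 0 := by
        rcases (Fin.zero_le i).lt_or_eq with h | h
        · exact le_of_lt (hf1 0 i h)
        · rw [← h]
      have h2 : f 0 < Fin.last M := lt_of_le_of_ne (Fin.le_last _) h0
      have h3 := lt_of_le_of_lt h1 h2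
      simpa [Fin.lt_iff_val_lt_val, Fin.val_last] using h3
    rw [Dd]
    refine Finset.sum_bij'
      (i := fun f hf => fun i : Fin (k+1) => (⟨(f i : ℕ), hlt f hf i⟩ : Fin M))
      (j := fun g _ => fun i => (g i).castSucc) ?_ ?_ ?_ ?_ ?_
    · intro f hf
      obtain ⟨hf1, _⟩ := Finset.mem_filter.mp hf
      rw [mem_strictSet] at hf1
      rw [mem_strictSet]
      intro i j hij
      exact hf1 i j hij
    · intro g hg
      rw [mem_strictSet] at hg
      simp only [Finset.mem_filter, mem_strictSet]
      constructor
      · intro i j hij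
        exact Fin.castSucc_lt_castSucc_iff.mpr (hg i j hij)
      · exact ne_of_lt (Fin.castSucc_lt_last _)
    · intro f hf
      funext i
      apply Fin.ext
      simp
    · intro g hg
      funext i
      apply Fin.ext
      simp
    · intro f hf
      simp [wt]

/-- The generating power series (in the length variable) of `Pp`, with `c`-dilated lengths
and sign `s`. -/
noncomputable def ser (s q : R) (c M : ℕ) : PowerSeries R :=
  PowerSeries.mk fun t => if c ∣ t then s ^ (t / c) * Pp q M (t / c) else 0

/-- The generating power series of `Dd`. -/
noncomputable def Dser (q : R) (M : ℕ) : PowerSeries R := PowerSeries.mk fun t => Dd q M t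

lemma ser_rel (s q : R) (c M : ℕ) (hc : c ≠ 0) :
    ser s q c M = ser s q c (M + 1) * (1 - PowerSeries.C (s * q ^ (M + 1)) * X ^ c) := by
  have hcpos : 0 < c := Nat.pos_of_ne_zero hc
  ext n
  rw [mul_sub, mul_one, ← mul_assoc, map_sub, coeff_mul_X_pow', coeff_mul_C]
  simp only [ser, coeff_mk]
  by_cases hdvd : c ∣ n
  · obtain ⟨k, rfl⟩ := hdvd
    rw [if_pos (dvd_mul_right c k), if_pos (dvd_mul_right c k),
      Nat.mul_div_cancel_left _ hcpos]
    rcases Nat.eq_zero_or_pos k with rfl | hk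
    · rw [if_neg (by simpa using hcpos.ne'), Pp_k0, Pp_k0]
      simp
    · obtain ⟨k', rfl⟩ : ∃ k', k = k' + 1 := ⟨k - 1, by omega⟩
      have hle : c ≤ c * (k' + 1) := Nat.le_mul_of_pos_right c (by omega)
      have hsub : c * (k' + 1) - c = c * k' := by ring_nf; omega
      rw [if_pos hle, hsub, if_pos (dvd_mul_right c k'),
        Nat.mul_div_cancel_left _ hcpos, Pp_succ]
      ring
  · rw [if_neg hdvd, if_neg hdvd]
    by_cases hle : c ≤ n
    · have hnd : ¬ c ∣ n - c := by
        intro h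
        refine hdvd ?_
        have := Nat.dvd_add h (dvd_refl c)
        rwa [Nat.sub_add_cancel hle] at this
      rw [if_pos hle, if_neg hnd]
      ring
    · rw [if_neg hle]
      ring

lemma Dser_rel (q : R) (M : ℕ) :
    Dser q (M + 1) = Dser q M * (1 + PowerSeries.C (q ^ (M + 1)) * X) := by
  ext n
  rw [mul_add, mul_one, ← mul_assoc, map_add]
  have hX : (Dser q M * PowerSeries.C (q ^ (M+1))) * X
      = (Dser q M * PowerSeries.C (q ^ (M+1))) * X ^ 1 := by rw [pow_one]
  rw [hX, coeff_mul_X_pow', coeff_mul_C]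
  simp only [Dser, coeff_mk]
  cases n with
  | zero => simp [Dd_k0]
  | succ t =>
    rw [if_pos (by omega : 1 ≤ t + 1)]
    simp only [Nat.add_sub_cancel]
    rw [Dd_succ]
    ring

lemma ser_base (s q : R) (c : ℕ) (hc : c ≠ 0) : ser s q c 0 = 1 := by
  ext n
  simp only [ser, coeff_mk]
  cases n with
  | zero => simp [Pp_k0]
  | succ t =>
    by_cases hdvd : c ∣ t + 1
    · rw [if_pos hdvd]
      have h2 : (t + 1) / c = ((t+1)/c - 1) + 1 := by
        have h1 : 1 ≤ (t + 1) / c := Nat.one_le_div_iff (Nat.pos_of_ne_zero hc) |>.mpr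
          (Nat.le_of_dvd (by omega) hdvd)
        omega
      rw [h2, Pp_M0, mul_zero, PowerSeries.coeff_one, if_neg (by omega)]
    · rw [if_neg hdvd, PowerSeries.coeff_one, if_neg (by omega)]

lemma Dser_base (q : R) : Dser q 0 = 1 := by
  ext n
  simp only [Dser, coeff_mk]
  cases n with
  | zero => simp [Dd_k0]
  | succ t => rw [Dd_M0, PowerSeries.coeff_one, if_neg (by omega)]

lemma main_prod {R : Type*} [CommRing R] [IsDomain R] (q : R) (M : ℕ) :
    ser (-1 : R) (q ^ 2) 2 M * ser (1 : R) q 1 M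
      = ser (1 : R) (q ^ 4) 4 M * Dser q M := by
  induction M with
  | zero => rw [ser_base _ _ _ (by norm_num), ser_base _ _ _ (by norm_num),
      ser_base _ _ _ (by norm_num), Dser_base]
  | succ M ih =>
    set a : PowerSeries R := PowerSeries.C (q ^ (M + 1)) with ha
    have h2 : PowerSeries.C ((-1 : R) * (q ^ 2) ^ (M + 1)) = -(a ^ 2) := by
      rw [ha, ← map_pow, ← map_neg]
      congr 1
      rw [← pow_mul, ← pow_mul]
      ring
    have h1 : PowerSeries.C ((1 : R) * q ^ (M + 1)) = a := by
      rw [ha, one_mul]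
    have h4 : PowerSeries.C ((1 : R) * (q ^ 4) ^ (M + 1)) = a ^ 4 := by
      rw [ha, ← map_pow]
      congr 1
      rw [← pow_mul, ← pow_mul]
      ring
    have rA := ser_rel (-1 : R) (q ^ 2) 2 M (by norm_num)
    have rB := ser_rel (1 : R) q 1 M (by norm_num)
    have rC := ser_rel (1 : R) (q ^ 4) 4 M (by norm_num)
    have rD := Dser_rel q M
    rw [h2] at rA
    rw [h1] at rB
    rw [h4] at rC
    rw [← ha] at rD
    have hne : (1 - a ^ 4 * X ^ 4 : PowerSeries R) ≠ 0 := by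
      have hcc : PowerSeries.constantCoeff (1 - a ^ 4 * X ^ 4) = 1 := by
        simp [ha]
      intro h
      rw [h, map_zero] at hcc
      exact one_ne_zero hcc.symm
    apply mul_right_cancel₀ hne
    calc ser (-1 : R) (q ^ 2) 2 (M+1) * ser 1 q 1 (M+1) * (1 - a ^ 4 * X ^ 4)
        = (ser (-1 : R) (q ^ 2) 2 (M+1) * (1 - (-(a^2)) * X ^ 2))
          * (ser 1 q 1 (M+1) * (1 - a * X ^ 1)) * (1 + a * X) := by ring
      _ = ser (-1 : R) (q ^ 2) 2 M * ser 1 q 1 M * (1 + a * X) := by rw [← rA, ← rB]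
      _ = ser (1 : R) (q ^ 4) 4 M * Dser q M * (1 + a * X) := by rw [ih]
      _ = ser (1 : R) (q ^ 4) 4 M * Dser q (M+1) := by rw [rD]; ring
      _ = ser (1 : R) (q ^ 4) 4 (M+1) * Dser q (M+1) * (1 - a ^ 4 * X ^ 4) := by
          rw [rC]; ring

lemma sum_dvd_collapse (c : ℕ) (hc : 0 < c) (n : ℕ) (F : ℕ → ℕ → R) :
    ∑ i ∈ Finset.range (n + 1), (if c ∣ i then F (i / c) (n - i) else 0)
      = ∑ k ∈ Finset.range (n / c + 1), F k (n - c * k) := by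
  classical
  rw [← Finset.sum_filter_of_ne
    (p := fun i => c ∣ i)
    (fun x _ hne => by
      by_contra hd
      rw [if_neg hd] at hne
      exact hne rfl)]
  refine Finset.sum_bij' (i := fun a _ => a / c) (j := fun k _ => c * k) ?_ ?_ ?_ ?_ ?_
  · intro a ha
    obtain ⟨ha1, _⟩ := Finset.mem_filter.mp ha
    rw [Finset.mem_range] at ha1
    show a / c ∈ Finset.range (n / c + 1)
    exact Finset.mem_range.mpr (by
      have h2 : a / c ≤ n / c := Nat.div_le_div_right (by omega)
      omega)
  · intro k hk
    rw [Finset.mem_range] at hk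
    have h1 : n / c * c ≤ n := Nat.div_mul_le_self n c
    have h3 : c * k ≤ c * (n / c) := Nat.mul_le_mul_left c (by omega)
    have h4 : c * (n / c) = n / c * c := Nat.mul_comm _ _
    show c * k ∈ (Finset.range (n + 1)).filter (fun i => c ∣ i)
    exact Finset.mem_filter.mpr ⟨Finset.mem_range.mpr (by omega), dvd_mul_right c k⟩
  · intro a ha
    exact Nat.mul_div_cancel' (Finset.mem_filter.mp ha).2
  · intro k _
    exact Nat.mul_div_cancel_left k hc
  · intro a ha
    rw [if_pos (Finset.mem_filter.mp ha).2, Nat.mul_div_cancel' (Finset.mem_filter.mp ha).2]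

lemma bridgeL (q : R) (M k r : ℕ) :
    ∑ f ∈ antiSet M k, ∑ g ∈ antiSet M r,
        ((-1 : R) ^ k * q ^ (2 * wt f + wt g))
      = ((-1 : R) ^ k * Pp (q ^ 2) M k) * Pp q M r := by
  rw [Pp, Pp, mul_assoc, Finset.sum_mul_sum, Finset.mul_sum]
  refine Finset.sum_congr rfl fun f _ => ?_
  rw [Finset.mul_sum]
  refine Finset.sum_congr rfl fun g _ => ?_
  rw [pow_add, pow_mul]

lemma bridgeR (q : R) (M k r : ℕ) :
    ∑ f ∈ antiSet M k, ∑ g ∈ strictSet M r, q ^ (4 * wt f + wt g)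
      = Pp (q ^ 4) M k * Dd q M r := by
  rw [Pp, Dd, Finset.sum_mul_sum]
  refine Finset.sum_congr rfl fun f _ => ?_
  refine Finset.sum_congr rfl fun g _ => ?_
  rw [pow_add, pow_mul]

end Aux

/-- Partitions with `k` parts, each part in `[1, m+1]`, are encoded as antitone functions
`Fin k → Fin (m+1)` (part `i` being `f i + 1`); distinct-part partitions are strictly
decreasing.  The signed sum over pairs `(λ, μ)` of partitions with parts `≤ m+1` and
`2ℓ(λ) + ℓ(μ) = n` of `(-1)^{ℓ(λ)} q^{2|λ|+|μ|}` equals the sum over pairs `(τ, μ)` with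
`τ` a partition, `μ` a distinct-part partition, parts `≤ m+1` and `4ℓ(τ) + ℓ(μ) = n`, of
`q^{4|τ|+|μ|}`. -/
theorem signed_partition_pairs (m n : ℕ) :
    ∑ k ∈ range (n / 2 + 1),
      ∑ f ∈ {f : Fin k → Fin (m + 1) | ∀ i j : Fin k, i ≤ j → f j ≤ f i},
        ∑ g ∈ {g : Fin (n - 2 * k) → Fin (m + 1) |
                ∀ i j : Fin (n - 2 * k), i ≤ j → g j ≤ g i},
          ((-1 : RatFunc ℚ) ^ k *
            RatFunc.X ^ (2 * (∑ i, ((f i : ℕ) + 1)) + ∑ i, ((g i : ℕ) + 1))) =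
    ∑ k ∈ range (n / 4 + 1),
      ∑ f ∈ {f : Fin k → Fin (m + 1) | ∀ i j : Fin k, i ≤ j → f j ≤ f i},
        ∑ g ∈ {g : Fin (n - 4 * k) → Fin (m + 1) |
                ∀ i j : Fin (n - 4 * k), i < j → g j < g i},
          (RatFunc.X : RatFunc ℚ) ^ (4 * (∑ i, ((f i : ℕ) + 1)) + ∑ i, ((g i : ℕ) + 1)) := by
  classical
  set q : RatFunc ℚ := RatFunc.X with hq
  have H := congrArg (PowerSeries.coeff n) (main_prod q (m + 1))
  rw [PowerSeries.coeff_mul, PowerSeries.coeff_mul,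
    Finset.Nat.sum_antidiagonal_eq_sum_range_succ_mk,
    Finset.Nat.sum_antidiagonal_eq_sum_range_succ_mk] at H
  simp only [ser, Dser, PowerSeries.coeff_mk, one_dvd, if_true, one_pow, one_mul,
    Nat.div_one, ite_mul, zero_mul] at H
  have E2 : ∑ i ∈ Finset.range (n + 1),
      (if 2 ∣ i then ((-1 : RatFunc ℚ) ^ (i / 2) * Pp (q ^ 2) (m + 1) (i / 2))
          * Pp q (m + 1) (n - i) else 0)
      = ∑ k ∈ Finset.range (n / 2 + 1),
        ((-1 : RatFunc ℚ) ^ k * Pp (q ^ 2) (m + 1) k) * Pp q (m + 1) (n - 2 * k) :=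
    sum_dvd_collapse 2 (by norm_num) n
      (fun k r => ((-1 : RatFunc ℚ) ^ k * Pp (q ^ 2) (m + 1) k) * Pp q (m + 1) r)
  have E4 : ∑ i ∈ Finset.range (n + 1),
      (if 4 ∣ i then Pp (q ^ 4) (m + 1) (i / 4) * Dd q (m + 1) (n - i) else 0)
      = ∑ k ∈ Finset.range (n / 4 + 1),
        Pp (q ^ 4) (m + 1) k * Dd q (m + 1) (n - 4 * k) :=
    sum_dvd_collapse 4 (by norm_num) n
      (fun k r => Pp (q ^ 4) (m + 1) k * Dd q (m + 1) r)
  rw [E2, E4] at H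
  calc ∑ k ∈ range (n / 2 + 1),
      ∑ f ∈ {f : Fin k → Fin (m + 1) | ∀ i j : Fin k, i ≤ j → f j ≤ f i},
        ∑ g ∈ {g : Fin (n - 2 * k) → Fin (m + 1) |
                ∀ i j : Fin (n - 2 * k), i ≤ j → g j ≤ g i},
          ((-1 : RatFunc ℚ) ^ k *
            RatFunc.X ^ (2 * (∑ i, ((f i : ℕ) + 1)) + ∑ i, ((g i : ℕ) + 1)))
      = ∑ k ∈ Finset.range (n / 2 + 1),
        ((-1 : RatFunc ℚ) ^ k * Pp (q ^ 2) (m + 1) k) * Pp q (m + 1) (n - 2 * k) := by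
        refine Finset.sum_congr rfl fun k _ => ?_
        exact bridgeL q (m + 1) k (n - 2 * k)
    _ = ∑ k ∈ Finset.range (n / 4 + 1),
        Pp (q ^ 4) (m + 1) k * Dd q (m + 1) (n - 4 * k) := H
    _ = _ := by
        refine Finset.sum_congr rfl fun k _ => ?_
        exact (bridgeR q (m + 1) k (n - 4 * k)).symm
end
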